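/- For every real k with 1 ≤ k ≤ 2, every real L ≥ 1, and every integer d ≥ 3, ∫_L^∞ exp(−x^{2/k})·x^{2d} dx ≤ exp(−L^{2/k})·(L^{4d} + (16·k·d)^{2kd}). -/

import Mathlib

open Real MeasureTheory Set

lemma aux_poly {m t : ℝ} (hm : 0 < m) (ht : 0 < t) :
    t ^ m ≤ (4 * m) ^ m * Real.exp (t / 4) := by
  have h4m : (0:ℝ) < 4 * m := by linarith
  have hlog : Real.log t ≤ Real.log (4 * m) + (t / (4 * m) - 1) := by
    have h1 : Real.log (t / (4 * m)) ≤ t / (4 * m) - 1 :=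
      Real.log_le_sub_one_of_pos (by positivity)
    have h2 : Real.log (t / (4 * m)) = Real.log t - Real.log (4 * m) :=
      Real.log_div (ne_of_gt ht) (ne_of_gt h4m)
    linarith
  have h1 : t ^ m = Real.exp (Real.log t * m) := Real.rpow_def_of_pos ht m
  have h2 : (4 * m) ^ m = Real.exp (Real.log (4 * m) * m) := Real.rpow_def_of_pos h4m m
  rw [h1, h2, ← Real.exp_add, Real.exp_le_exp]
  have : m * (t / (4 * m)) = t / 4 := by field_simp
  nlinarith [mul_le_mul_of_nonneg_left hlog hm.le]

lemma aux_integral (k : ℝ) (hk1 : 1 ≤ k) (hk2 : k ≤ 2) (L : ℝ) (hL : 1 ≤ L)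
    (d : ℕ) (hd : 3 ≤ d) :
    ∫ x in Set.Ici L, Real.exp (-(x ^ (2 / k))) * x ^ (2 * d) ≤
      Real.exp (-(L ^ (2 / k))) * ((2*L)^(2*d) * L + 4 * (4*(k*(d:ℝ)))^(k*(d:ℝ))) := by
  have hk0 : (0:ℝ) < k := by linarith
  set p : ℝ := 2 / k with hp_def
  set m : ℝ := k * (d:ℝ) with hm_def
  have hd3 : (3:ℝ) ≤ (d:ℝ) := by exact_mod_cast hd
  have hm0 : 0 < m := by positivity
  have hm3 : 3 ≤ m := by nlinarith
  have hp1 : 1 ≤ p := by rw [hp_def, le_div_iff₀ hk0]; linarith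
  have hp2 : p ≤ 2 := by rw [hp_def, div_le_iff₀ hk0]; nlinarith
  have hL0 : (0:ℝ) < L := by linarith
  have hA0 : (0:ℝ) ≤ (4*m)^m := Real.rpow_nonneg (by linarith) m
  set f : ℝ → ℝ := fun x => Real.exp (-(x ^ p)) * x ^ (2*d) with hf_def
  -- measurability
  have hmeas : Measurable f := by
    rw [hf_def]; fun_prop
  -- pointwise bound on [L, 2L)
  have hboundA : ∀ x ∈ Set.Ico L (2*L), f x ≤ Real.exp (-(L^p)) * (2*L)^(2*d) := by
    intro x hx
    have hx1 : L ≤ x := hx.1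
    have hx2 : x ≤ 2*L := hx.2.le
    have h1 : Real.exp (-(x^p)) ≤ Real.exp (-(L^p)) := by
      rw [Real.exp_le_exp, neg_le_neg_iff]
      exact Real.rpow_le_rpow hL0.le hx1 (by linarith)
    have h2 : x ^ (2*d) ≤ (2*L) ^ (2*d) := pow_le_pow_left₀ (by linarith) hx2 _
    exact mul_le_mul h1 h2 (pow_nonneg (by linarith) _) (Real.exp_nonneg _)
  -- pointwise bound on [2L, ∞)
  have hboundB : ∀ x ∈ Set.Ici (2*L), f x ≤
      Real.exp (-(L^p)) * ((4*m)^m * Real.exp (-(x/4))) := by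
    intro x hx
    have hx2 : 2*L ≤ x := hx
    have hx1 : (1:ℝ) ≤ x := by linarith
    have hx0 : (0:ℝ) < x := by linarith
    have hxp_pos : 0 < x^p := Real.rpow_pos_of_pos hx0 p
    have key1 : (x:ℝ)^(2*d) ≤ (4*m)^m * Real.exp (x^p/4) := by
      have e : (x:ℝ)^(2*d) = (x^p)^m := by
        rw [← Real.rpow_natCast x (2*d), ← Real.rpow_mul hx0.le]
        congr 1
        push_cast
        rw [hp_def, hm_def]
        field_simp
      rw [e]
      exact aux_poly hm0 hxp_pos
    have key2 : L^p ≤ x^p/2 := by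
      have e1 : (2*L)^p ≤ x^p := Real.rpow_le_rpow (by linarith) hx2 (by linarith)
      have e2 : (2*L)^p = 2^p * L^p := Real.mul_rpow (by norm_num) hL0.le
      have e3 : (2:ℝ) ≤ 2^p := by
        calc (2:ℝ) = 2^(1:ℝ) := (Real.rpow_one 2).symm
        _ ≤ 2^p := Real.rpow_le_rpow_of_exponent_le (by norm_num) hp1
      have e4 : (0:ℝ) < L^p := Real.rpow_pos_of_pos hL0 p
      nlinarith
    have key3 : x ≤ x^p := by
      calc x = x^(1:ℝ) := (Real.rpow_one x).symm
      _ ≤ x^p := Real.rpow_le_rpow_of_exponent_le hx1 hp1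
    calc f x ≤ Real.exp (-(x^p)) * ((4*m)^m * Real.exp (x^p/4)) := by
          exact mul_le_mul_of_nonneg_left key1 (Real.exp_nonneg _)
    _ = (4*m)^m * Real.exp (x^p/4 - x^p) := by
          rw [show x^p/4 - x^p = -(x^p) + x^p/4 by ring, Real.exp_add]; ring
    _ ≤ (4*m)^m * Real.exp (-(L^p) + -(x/4)) := by
          apply mul_le_mul_of_nonneg_left _ hA0
          rw [Real.exp_le_exp]
          linarith
    _ = Real.exp (-(L^p)) * ((4*m)^m * Real.exp (-(x/4))) := by
          rw [Real.exp_add]; ring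
  -- integrability on [L, 2L)
  have hintA : IntegrableOn f (Set.Ico L (2*L)) := by
    have hcont : ContinuousOn f (Set.Icc L (2*L)) := by
      apply ContinuousOn.mul
      · apply Real.continuous_exp.comp_continuousOn
        apply ContinuousOn.neg
        apply ContinuousOn.rpow_const continuousOn_id
        intro x _
        exact Or.inr (by linarith)
      · exact (continuous_pow (2*d)).continuousOn
    exact (hcont.integrableOn_Icc).mono_set Set.Ico_subset_Icc_self
  -- the dominating exponential
  have hg_int : IntegrableOn (fun x => Real.exp (-(x/4))) (Set.Ioi (0:ℝ)) := by
    have := exp_neg_integrableOn_Ioi (0:ℝ) (show (0:ℝ) < 4⁻¹ by norm_num)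
    simpa [div_eq_inv_mul] using this
  have hsub : Set.Ici (2*L) ⊆ Set.Ioi (0:ℝ) := fun x hx => by
    simp only [Set.mem_Ioi]; have : 2*L ≤ x := hx; linarith
  have hg_intB : IntegrableOn
      (fun x => Real.exp (-(L^p)) * ((4*m)^m * Real.exp (-(x/4)))) (Set.Ici (2*L)) := by
    exact (((hg_int.mono_set hsub).const_mul ((4*m)^m)).const_mul (Real.exp (-(L^p))))
  -- integrability on [2L, ∞)
  have hintB : IntegrableOn f (Set.Ici (2*L)) := by
    apply Integrable.mono' hg_intB (hmeas.aestronglyMeasurable.restrict)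
    rw [ae_restrict_iff' measurableSet_Ici]
    apply ae_of_all
    intro x hx
    have hx0 : (0:ℝ) ≤ x := by have : 2*L ≤ x := hx; linarith
    rw [Real.norm_eq_abs, abs_of_nonneg (by positivity)]
    exact hboundB x hx
  -- split the integral
  have hdisj : Disjoint (Set.Ico L (2*L)) (Set.Ici (2*L)) := by
    rw [Set.disjoint_left]
    rintro x ⟨_, h2⟩ h3
    exact absurd (Set.mem_Ici.mp h3) (not_le.mpr h2)
  have hunion : Set.Ico L (2*L) ∪ Set.Ici (2*L) = Set.Ici L :=
    Set.Ico_union_Ici_eq_Ici (by linarith)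
  have hsplit : ∫ x in Set.Ici L, f x
      = (∫ x in Set.Ico L (2*L), f x) + ∫ x in Set.Ici (2*L), f x := by
    rw [← hunion, setIntegral_union hdisj measurableSet_Ici hintA hintB]
  -- bound A
  have hIA : ∫ x in Set.Ico L (2*L), f x ≤ Real.exp (-(L^p)) * ((2*L)^(2*d) * L) := by
    calc ∫ x in Set.Ico L (2*L), f x
        ≤ ∫ _x in Set.Ico L (2*L), Real.exp (-(L^p)) * (2*L)^(2*d) := by
          apply setIntegral_mono_on hintA ((integrableOn_const_iff).mpr
            (Or.inr (by rw [Real.volume_Ico]; exact ENNReal.ofReal_lt_top)))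
            measurableSet_Ico hboundA
    _ = (volume (Set.Ico L (2*L))).toReal • (Real.exp (-(L^p)) * (2*L)^(2*d)) :=
          setIntegral_const _
    _ = Real.exp (-(L^p)) * ((2*L)^(2*d) * L) := by
          rw [Real.volume_Ico, ENNReal.toReal_ofReal (by linarith), smul_eq_mul]
          ring
  -- bound B
  have hval : ∫ x in Set.Ioi (0:ℝ), Real.exp (-(x/4)) = 4 := by
    have h := integral_comp_mul_left_Ioi (fun y => Real.exp (-y)) 0
      (show (0:ℝ) < 4⁻¹ by norm_num)
    simp only [mul_zero, smul_eq_mul] at h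
    rw [show (fun x : ℝ => Real.exp (-(x/4))) = fun x : ℝ => Real.exp (-(4⁻¹ * x)) by
      funext x; rw [div_eq_inv_mul], h, integral_exp_neg_Ioi]
    norm_num
  have hIB : ∫ x in Set.Ici (2*L), f x ≤ Real.exp (-(L^p)) * (4 * (4*m)^m) := by
    calc ∫ x in Set.Ici (2*L), f x
        ≤ ∫ x in Set.Ici (2*L), Real.exp (-(L^p)) * ((4*m)^m * Real.exp (-(x/4))) :=
          setIntegral_mono_on hintB hg_intB measurableSet_Ici hboundB
    _ = Real.exp (-(L^p)) * ((4*m)^m * ∫ x in Set.Ici (2*L), Real.exp (-(x/4))) := by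
          rw [integral_const_mul, integral_const_mul]
    _ ≤ Real.exp (-(L^p)) * ((4*m)^m * ∫ x in Set.Ioi (0:ℝ), Real.exp (-(x/4))) := by
          apply mul_le_mul_of_nonneg_left _ (Real.exp_nonneg _)
          apply mul_le_mul_of_nonneg_left _ hA0
          apply setIntegral_mono_set hg_int
          · exact ae_of_all _ fun x => Real.exp_nonneg _
          · exact HasSubset.Subset.eventuallyLE hsub
    _ = Real.exp (-(L^p)) * (4 * (4*m)^m) := by rw [hval]; ring
  calc ∫ x in Set.Ici L, f x ≤ Real.exp (-(L^p)) * ((2*L)^(2*d) * L)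
        + Real.exp (-(L^p)) * (4 * (4*m)^m) := by rw [hsplit]; exact add_le_add hIA hIB
  _ = Real.exp (-(L^p)) * ((2*L)^(2*d) * L + 4 * (4*m)^m) := by ring

lemma aux_arith (k L : ℝ) (d : ℕ) (hk1 : 1 ≤ k) (hL : 1 ≤ L) (hd : 3 ≤ d) :
    (2*L)^(2*d) * L + 4 * (4*(k*(d:ℝ)))^(k*(d:ℝ)) ≤
      L^(4*d) + (16*(k*(d:ℝ)))^(2*(k*(d:ℝ))) := by
  set m : ℝ := k * (d:ℝ) with hm_def
  have hd3 : (3:ℝ) ≤ (d:ℝ) := by exact_mod_cast hd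
  have hm3 : 3 ≤ m := by nlinarith
  have hdm : (d:ℝ) ≤ m := by nlinarith
  have h16m : (0:ℝ) < 16 * m := by linarith
  have hA0 : (0:ℝ) ≤ (4*m)^m := Real.rpow_nonneg (by linarith) m
  set A : ℝ := (4*m)^m with hA_def
  set C : ℝ := (16*m)^m with hC_def
  have hCsq : (16*m)^(2*m) = C * C := by
    rw [hC_def, ← Real.rpow_add h16m, two_mul]
  have h4A : 4 * A ≤ C := by
    have h1 : (16*m) = 4 * (4*m) := by ring
    have h2 : C = 4^m * (4*m)^m := by
      rw [hC_def, h1, Real.mul_rpow (by norm_num) (by linarith)]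
    have h3 : (4:ℝ) ≤ 4^m := by
      calc (4:ℝ) = 4^(1:ℝ) := (Real.rpow_one 4).symm
      _ ≤ 4^m := Real.rpow_le_rpow_of_exponent_le (by norm_num) (by linarith)
    rw [h2]
    exact mul_le_mul_of_nonneg_right h3 hA0
  have hC2 : (2:ℝ) ≤ C := by
    calc (2:ℝ) ≤ 16*m := by linarith
    _ = (16*m)^(1:ℝ) := (Real.rpow_one _).symm
    _ ≤ C := Real.rpow_le_rpow_of_exponent_le (by linarith) (by linarith)
  rcases le_total 4 L with hL4 | hL4
  · -- L ≥ 4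
    obtain ⟨e, rfl⟩ : ∃ e, d = e + 3 := ⟨d - 3, by omega⟩
    have hL0 : (0:ℝ) ≤ L := by linarith
    have h1 : (2:ℝ)^(2*(e+3)) ≤ L^(2*(e+3)-1) := by
      calc (2:ℝ)^(2*(e+3)) ≤ 2^(2*(2*(e+3)-1)) := by
            apply pow_le_pow_right₀ (by norm_num); omega
      _ = 4^(2*(e+3)-1) := by rw [pow_mul]; norm_num
      _ ≤ L^(2*(e+3)-1) := by apply pow_le_pow_left₀ (by norm_num) hL4
    have hpart1 : (2*L)^(2*(e+3)) * L ≤ L^(4*(e+3)) := by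
      have : (2*L)^(2*(e+3)) * L = 2^(2*(e+3)) * (L^(2*(e+3)) * L) := by
        rw [mul_pow]; ring
      rw [this]
      calc 2^(2*(e+3)) * (L^(2*(e+3)) * L) ≤ L^(2*(e+3)-1) * (L^(2*(e+3)) * L) := by
            apply mul_le_mul_of_nonneg_right h1 (by positivity)
      _ = L^(4*(e+3)) := by
            rw [← pow_succ, ← pow_add]; congr 1; omega
    have hpart2 : 4 * A ≤ (16*m)^(2*m) := by
      rw [hCsq]; nlinarith
    linarith
  · -- L ≤ 4
    have hL0 : (0:ℝ) ≤ L := by linarith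
    have h1 : (2*L)^(2*d) * L ≤ 8^(2*d) * 4 := by
      apply mul_le_mul _ hL4 hL0 (by positivity)
      apply pow_le_pow_left₀ (by linarith) (by linarith)
    have h8 : (8:ℝ) ≤ 4^(2*d) := by
      calc (8:ℝ) ≤ 4^(2*3) := by norm_num
      _ ≤ 4^(2*d) := by apply pow_le_pow_right₀ (by norm_num); omega
    have h2 : (8:ℝ)^(2*d) * 4 * 2 ≤ (16*m)^(2*m) := by
      have e1 : (8:ℝ)^(2*d) * 4 * 2 = 8^(2*d) * 8 := by ring
      have e2 : (8:ℝ)^(2*d) * 8 ≤ 8^(2*d) * 4^(2*d) :=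
        mul_le_mul_of_nonneg_left h8 (by positivity)
      have e3 : (8:ℝ)^(2*d) * 4^(2*d) = 32^(2*d) := by
        rw [← mul_pow]; norm_num
      have e4 : (32:ℝ)^(2*d) = (32:ℝ)^((2*d : ℕ):ℝ) := (Real.rpow_natCast 32 (2*d)).symm
      have e5 : (32:ℝ)^((2*d : ℕ):ℝ) ≤ (16*m)^((2*d : ℕ):ℝ) := by
        apply Real.rpow_le_rpow (by norm_num) (by linarith) (by positivity)
      have e6 : (16*m)^((2*d : ℕ):ℝ) ≤ (16*m)^(2*m) := by
        apply Real.rpow_le_rpow_of_exponent_le (by linarith)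
        push_cast; linarith
      linarith [e2, e5, e6, e4 ▸ e3 ▸ e2]
    have h3 : 4 * A * 2 ≤ (16*m)^(2*m) := by
      rw [hCsq]; nlinarith
    have hLpow : (0:ℝ) ≤ L^(4*d) := by positivity
    linarith

theorem stmt_14 (k : ℝ) (hk1 : 1 ≤ k) (hk2 : k ≤ 2) (L : ℝ) (hL : 1 ≤ L)
    (d : ℕ) (hd : 3 ≤ d) :
    ∫ x in Set.Ici L, Real.exp (-(x ^ (2 / k))) * x ^ (2 * d) ≤
      Real.exp (-(L ^ (2 / k))) * (L ^ (4 * d) + (16 * k * (d : ℝ)) ^ (2 * k * (d : ℝ))) := by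
  calc ∫ x in Set.Ici L, Real.exp (-(x ^ (2 / k))) * x ^ (2 * d)
      ≤ Real.exp (-(L ^ (2 / k))) * ((2*L)^(2*d) * L + 4 * (4*(k*(d:ℝ)))^(k*(d:ℝ))) :=
        aux_integral k hk1 hk2 L hL d hd
  _ ≤ Real.exp (-(L ^ (2 / k))) * (L^(4*d) + (16*(k*(d:ℝ)))^(2*(k*(d:ℝ)))) :=
        mul_le_mul_of_nonneg_left (aux_arith k L d hk1 hL hd) (Real.exp_nonneg _)
  _ = Real.exp (-(L ^ (2 / k))) * (L ^ (4 * d) + (16 * k * (d : ℝ)) ^ (2 * k * (d : ℝ))) := by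
        rw [show (16*(k*(d:ℝ))) = 16*k*(d:ℝ) by ring, show 2*(k*(d:ℝ)) = 2*k*(d:ℝ) by ring]
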